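/- Let n ≥ 1, σ > 0, ν > 0, let X be a nonempty set, let K be an n×n real symmetric positive semidefinite matrix with all diagonal entries K_{i,i} ≤ 1, let y ∈ ℝⁿ, and let v : X → ℝⁿ be such that for every x ∈ X the bordered (n+1)×(n+1) matrix [[K, v(x)], [v(x)ᵀ, 1]] is positive semidefinite. Define the posterior mean μ(x) = v(x)ᵀ (K + σ² I)^{−1} y, the posterior standard deviation s(x) = (1 − v(x)ᵀ (K + σ² I)^{−1} v(x))^{1/2}, and suppose x⁺ ∈ X satisfies μ(x⁺) ≥ μ(x) for all x ∈ X; write μ⁺ = μ(x⁺). Define the expected improvement EI(x) = ν s(x) τ((μ(x) − μ⁺)/(ν s(x))), where τ(z) = z Φ(z) + φ(z). If x* ∈ X satisfies EI(x*) ≥ EI(x) for all x ∈ X, then |μ(x*) − μ⁺| ≤ (log(n + σ²) − log(σ²))^{1/2} · ν s(x*). -/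

import Mathlib

open Matrix

/-- The standard normal density `φ`. -/
noncomputable def stdNormalPdf (z : ℝ) : ℝ :=
  (Real.sqrt (2 * Real.pi))⁻¹ * Real.exp (-z ^ 2 / 2)

/-- The standard normal cumulative distribution function `Φ`. -/
noncomputable def stdNormalCdf (z : ℝ) : ℝ := ∫ t in Set.Iic z, stdNormalPdf t

/-- `τ(z) = z Φ(z) + φ(z)`. -/
noncomputable def tauEI (z : ℝ) : ℝ := z * stdNormalCdf z + stdNormalPdf z

lemma stdNormalPdf_pos (z : ℝ) : 0 < stdNormalPdf z := by
  have h2π : (0:ℝ) < 2 * Real.pi := by positivity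
  unfold stdNormalPdf
  positivity

lemma stdNormalCdf_nonneg (z : ℝ) : 0 ≤ stdNormalCdf z :=
  MeasureTheory.setIntegral_nonneg measurableSet_Iic fun t _ => (stdNormalPdf_pos t).le

lemma tauEI_le (z : ℝ) (hz : z ≤ 0) : tauEI z ≤ stdNormalPdf z := by
  have : z * stdNormalCdf z ≤ 0 := mul_nonpos_of_nonpos_of_nonneg hz (stdNormalCdf_nonneg z)
  unfold tauEI; linarith

lemma tauEI_zero : tauEI 0 = stdNormalPdf 0 := by simp [tauEI]

lemma stdNormalPdf_eq (z : ℝ) : stdNormalPdf z = Real.exp (-z ^ 2 / 2) * stdNormalPdf 0 := by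
  simp [stdNormalPdf]; ring

theorem bordered_quad (n : ℕ) (K : Matrix (Fin n) (Fin n) ℝ) (w : Fin n → ℝ)
    (hB : (Matrix.fromBlocks K
        (Matrix.of fun i (_ : Unit) => w i)
        (Matrix.of fun (_ : Unit) j => w j)
        (Matrix.of fun (_ : Unit) (_ : Unit) => (1 : ℝ))).PosSemidef)
    (u : Fin n → ℝ) (t : ℝ) :
    0 ≤ u ⬝ᵥ K.mulVec u + t * (u ⬝ᵥ w) + t * (w ⬝ᵥ u) + t ^ 2 := by
  have h := hB.dotProduct_mulVec_nonneg (Sum.elim u (fun _ => t))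
  simp only [star_trivial, fromBlocks_mulVec, sumElim_dotProduct_sumElim,
    Sum.elim_comp_inl, Sum.elim_comp_inr, dotProduct_add] at h
  have e1 : (u ⬝ᵥ (Matrix.of fun i (_ : Unit) => w i) *ᵥ fun _ => t) = t * (u ⬝ᵥ w) := by
    simp [mulVec, dotProduct, Finset.mul_sum]
    exact Finset.sum_congr rfl (fun i _ => by ring)
  have e2 : ((fun (_ : Unit) => t) ⬝ᵥ (Matrix.of fun (_ : Unit) j => w j) *ᵥ u) = t * (w ⬝ᵥ u) := by
    simp [mulVec, dotProduct, Finset.mul_sum]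
  have e3 : ((fun (_ : Unit) => t) ⬝ᵥ (Matrix.of fun (_ : Unit) (_ : Unit) => (1:ℝ)) *ᵥ fun _ => t) = t ^ 2 := by
    simp [mulVec, dotProduct, sq]
  rw [e1, e2, e3] at h
  linarith

theorem quad_le (n : ℕ) (K : Matrix (Fin n) (Fin n) ℝ) (hK : K.PosSemidef)
    (hdiag : ∀ i, K i i ≤ 1) (u : Fin n → ℝ) :
    u ⬝ᵥ K.mulVec u ≤ n * (u ⬝ᵥ u) := by
  have hentry : ∀ i j, |K i j| ≤ 1 := by
    intro i j
    have hsym : K j i = K i j := by simpa using hK.1.apply i j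
    have hp := hK.dotProduct_mulVec_nonneg (Pi.single i (1:ℝ) + Pi.single j 1)
    have hm := hK.dotProduct_mulVec_nonneg (Pi.single i (1:ℝ) - Pi.single j 1)
    simp only [star_trivial, mulVec_add, mulVec_sub, dotProduct_add, dotProduct_sub,
      add_dotProduct, sub_dotProduct, mulVec_single, mul_one,
      single_dotProduct, one_mul, Pi.add_apply, Pi.sub_apply,
      Pi.smul_apply, MulOpposite.op_one, one_smul, col_apply] at hp hm
    have hii := hdiag i
    have hjj := hdiag j
    rw [abs_le]
    constructor <;> linarith
  calc u ⬝ᵥ K.mulVec u ≤ |u ⬝ᵥ K.mulVec u| := le_abs_self _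
    _ ≤ ∑ i, ∑ j, |u i| * |u j| := by
        rw [dotProduct]
        refine (Finset.abs_sum_le_sum_abs _ _).trans (Finset.sum_le_sum fun i _ => ?_)
        rw [mulVec, dotProduct, Finset.mul_sum]
        refine (Finset.abs_sum_le_sum_abs _ _).trans (Finset.sum_le_sum fun j _ => ?_)
        rw [abs_mul, abs_mul]
        exact mul_le_mul_of_nonneg_left
          (mul_le_of_le_one_left (abs_nonneg (u j)) (hentry i j)) (abs_nonneg (u i))
    _ = (∑ i, |u i|) ^ 2 := by rw [sq, Finset.sum_mul_sum]
    _ ≤ n * ∑ i, |u i| ^ 2 := by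
        have := sq_sum_le_card_mul_sum_sq (s := Finset.univ) (f := fun i : Fin n => |u i|)
        simpa using this
    _ = n * (u ⬝ᵥ u) := by simp [dotProduct, sq_abs, sq]

/-- The key quadratic-form bounds: `0 ≤ vᵀ(K+σ²I)⁻¹v ≤ n/(n+σ²)`. -/
theorem q_bounds (n : ℕ) (σ : ℝ) (hσ : 0 < σ) (K : Matrix (Fin n) (Fin n) ℝ)
    (hK : K.PosSemidef) (hdiag : ∀ i, K i i ≤ 1) (vx : Fin n → ℝ)
    (hB : (Matrix.fromBlocks K
        (Matrix.of fun i (_ : Unit) => vx i)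
        (Matrix.of fun (_ : Unit) j => vx j)
        (Matrix.of fun (_ : Unit) (_ : Unit) => (1 : ℝ))).PosSemidef) :
    0 ≤ vx ⬝ᵥ (K + σ ^ 2 • 1)⁻¹.mulVec vx ∧
      vx ⬝ᵥ (K + σ ^ 2 • 1)⁻¹.mulVec vx ≤ n / (n + σ ^ 2) := by
  have hApd : (K + σ ^ 2 • 1).PosDef := by
    rw [smul_one_eq_diagonal]
    exact Matrix.PosDef.posSemidef_add hK (Matrix.PosDef.diagonal fun _ => by positivity)
  have hdet : IsUnit (K + σ ^ 2 • 1).det := hApd.det_pos.ne'.isUnit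
  set w : Fin n → ℝ := (K + σ ^ 2 • 1)⁻¹.mulVec vx with hw
  have hAw : (K + σ ^ 2 • 1).mulVec w = vx := by
    rw [hw, mulVec_mulVec, Matrix.mul_nonsing_inv _ hdet, one_mulVec]
  set q : ℝ := vx ⬝ᵥ w with hqdef
  set a : ℝ := w ⬝ᵥ K.mulVec w with hadef
  set b : ℝ := w ⬝ᵥ w with hbdef
  have hq1 : q = a + σ ^ 2 * b := by
    rw [hqdef, dotProduct_comm, ← hAw, add_mulVec, smul_mulVec, one_mulVec,
      dotProduct_add, dotProduct_smul]
    simp [hadef, hbdef, smul_eq_mul]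
  have hwv : w ⬝ᵥ vx = q := by rw [hqdef, dotProduct_comm]
  have hq2 : q ^ 2 ≤ a := by
    have h := bordered_quad n K vx hB w (-q)
    rw [hwv, hqdef] at h
    nlinarith [h]
  have ha0 : 0 ≤ a := by have := hK.dotProduct_mulVec_nonneg w; simpa [star_trivial] using this
  have hb0 : 0 ≤ b := by
    rw [hbdef, dotProduct]
    exact Finset.sum_nonneg fun i _ => mul_self_nonneg _
  have h3 : a ≤ n * b := quad_le n K hK hdiag w
  have hq0 : 0 ≤ q := by rw [hq1]; positivity
  refine ⟨hq0, ?_⟩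
  have hnσ : (0:ℝ) < n + σ ^ 2 := by positivity
  have h4 : (n + σ ^ 2) * q ^ 2 ≤ n * q := by nlinarith [hq2, h3, sq_nonneg σ]
  rcases hq0.eq_or_lt with h | h
  · rw [← h]; positivity
  · rw [le_div_iff₀ hnσ]
    nlinarith [h4, h]

/-- With posterior mean `μ`, posterior standard deviation `s`, incumbent
`x⁺` maximising `μ`, and expected improvement `EI(x) = ν s(x) τ((μ(x) − μ⁺)/(ν s(x)))`,
any maximiser `x*` of `EI` satisfies
`|μ(x*) − μ⁺| ≤ √(log(n + σ²) − log σ²) · ν s(x*)`. -/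
theorem ei_maximizer_mean_gap_bound
    (n : ℕ) (hn : 1 ≤ n) (σ ν : ℝ) (hσ : 0 < σ) (hν : 0 < ν)
    {X : Type*} [Nonempty X]
    (K : Matrix (Fin n) (Fin n) ℝ) (hK : K.PosSemidef) (hdiag : ∀ i, K i i ≤ 1)
    (y : Fin n → ℝ) (v : X → Fin n → ℝ)
    (hB : ∀ x : X, (Matrix.fromBlocks K
        (Matrix.of fun i (_ : Unit) => v x i)
        (Matrix.of fun (_ : Unit) j => v x j)
        (Matrix.of fun (_ : Unit) (_ : Unit) => (1 : ℝ))).PosSemidef)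
    (μ : X → ℝ) (hμ : ∀ x, μ x = v x ⬝ᵥ (K + σ ^ 2 • 1)⁻¹.mulVec y)
    (s : X → ℝ) (hs : ∀ x, s x = Real.sqrt (1 - v x ⬝ᵥ (K + σ ^ 2 • 1)⁻¹.mulVec (v x)))
    (xp : X) (hxp : ∀ x, μ x ≤ μ xp)
    (EI : X → ℝ) (hEI : ∀ x, EI x = ν * s x * tauEI ((μ x - μ xp) / (ν * s x)))
    (xs : X) (hxs : ∀ x, EI x ≤ EI xs) :
    |μ xs - μ xp| ≤
      Real.sqrt (Real.log (n + σ ^ 2) - Real.log (σ ^ 2)) * (ν * s xs) := by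
  have hnσ : (0:ℝ) < (n:ℝ) + σ ^ 2 := by positivity
  have hn1 : (1:ℝ) ≤ (n:ℝ) := by exact_mod_cast hn
  -- bounds on s
  set c : ℝ := Real.sqrt (σ ^ 2 / (n + σ ^ 2)) with hc
  have hcpos : 0 < c := Real.sqrt_pos.mpr (by positivity)
  have hs_lb : ∀ x, c ≤ s x := by
    intro x
    obtain ⟨_, hub⟩ := q_bounds n σ hσ K hK hdiag (v x) (hB x)
    rw [hs x]
    apply Real.sqrt_le_sqrt
    have heq : σ ^ 2 / ((n:ℝ) + σ ^ 2) = 1 - (n:ℝ) / ((n:ℝ) + σ ^ 2) := by field_simp; ring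
    rw [heq]
    linarith
  have hs_ub : ∀ x, s x ≤ 1 := by
    intro x
    obtain ⟨hlb, _⟩ := q_bounds n σ hσ K hK hdiag (v x) (hB x)
    rw [hs x]
    exact Real.sqrt_le_one.mpr (by linarith)
  have hspos : ∀ x, 0 < s x := fun x => lt_of_lt_of_le hcpos (hs_lb x)
  have hνs : 0 < ν * s xs := mul_pos hν (hspos xs)
  -- the EI comparison
  set z : ℝ := (μ xs - μ xp) / (ν * s xs) with hz
  have hzle : z ≤ 0 := div_nonpos_of_nonpos_of_nonneg (by linarith [hxp xs]) hνs.le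
  have hEIxs : EI xs ≤ ν * s xs * stdNormalPdf z := by
    rw [hEI xs, ← hz]
    exact mul_le_mul_of_nonneg_left (tauEI_le z hzle) hνs.le
  have hEIxp : EI xp = ν * s xp * stdNormalPdf 0 := by
    rw [hEI xp]
    simp [tauEI_zero]
  have hpdf0 : 0 < stdNormalPdf 0 := stdNormalPdf_pos 0
  have hchain : ν * s xp * stdNormalPdf 0 ≤ ν * s xs * (Real.exp (-z ^ 2 / 2) * stdNormalPdf 0) := by
    rw [← stdNormalPdf_eq]
    calc ν * s xp * stdNormalPdf 0 = EI xp := hEIxp.symm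
      _ ≤ EI xs := hxs xp
      _ ≤ ν * s xs * stdNormalPdf z := hEIxs
  have hkey : c ≤ Real.exp (-z ^ 2 / 2) := by
    have h1 : s xp ≤ s xs * Real.exp (-z ^ 2 / 2) := by
      have hp : 0 < ν * stdNormalPdf 0 := mul_pos hν hpdf0
      rw [show ν * s xp * stdNormalPdf 0 = ν * stdNormalPdf 0 * s xp by ring,
        show ν * s xs * (Real.exp (-z ^ 2 / 2) * stdNormalPdf 0)
          = ν * stdNormalPdf 0 * (s xs * Real.exp (-z ^ 2 / 2)) by ring] at hchain
      exact le_of_mul_le_mul_left hchain hp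
    calc c ≤ s xp := hs_lb xp
      _ ≤ s xs * Real.exp (-z ^ 2 / 2) := h1
      _ ≤ 1 * Real.exp (-z ^ 2 / 2) := by
          exact mul_le_mul_of_nonneg_right (hs_ub xs) (Real.exp_pos _).le
      _ = Real.exp (-z ^ 2 / 2) := one_mul _
  -- take logs
  have hlog : Real.log c ≤ -z ^ 2 / 2 := by
    rw [← Real.log_exp (-z ^ 2 / 2)]
    exact Real.log_le_log hcpos hkey
  have hlogc : Real.log c = (Real.log (σ ^ 2) - Real.log (n + σ ^ 2)) / 2 := by
    rw [hc, Real.log_sqrt (by positivity),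
      Real.log_div (by positivity) (by positivity)]
  have hz2 : z ^ 2 ≤ Real.log (n + σ ^ 2) - Real.log (σ ^ 2) := by
    rw [hlogc] at hlog; linarith
  -- conclude
  have hrepr : μ xs - μ xp = z * (ν * s xs) := by
    rw [hz]; have := (hspos xs).ne'; field_simp
  rw [hrepr, abs_mul, abs_of_pos hνs]
  apply mul_le_mul_of_nonneg_right _ hνs.le
  calc |z| = Real.sqrt (z ^ 2) := (Real.sqrt_sq_eq_abs z).symm
    _ ≤ _ := Real.sqrt_le_sqrt hz2
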